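/- Fix 0 < λ ≤ 1, K ≥ 0, reals 0 < a < b and c < d < 0, and ω > 0. Let ξ : ℝ² → ℂ satisfy |ξ(p) − ξ(q)| ≤ K·|p − q|^λ for all p, q, and ξ(x,y) = 0 whenever (x,y) ∉ [a,b] × [c,d]. Define G(τ) = ∬_{ℝ²} ξ(x,y) · e^{τω} / (x e^{τω} − y)^{2} dx dy for complex τ. Then G is holomorphic (complex differentiable) on the strip { τ ∈ ℂ : |Im τ| < π/(2ω) }, and for every real t one has G(t) = ∬_{ℝ²} ξ(e^{−tω} x, y) (x − y)^{-2} dx dy. -/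

import Mathlib

open MeasureTheory

set_option maxHeartbeats 1000000 in
/-- The complexified pairing `G(τ)` of the extended Liouville map along a simple
quake-bend with a Hölder test function `ξ` is holomorphic on the strip
`|Im τ| < π/(2ω)` and agrees with the real earthquake pairing on the real axis. -/
theorem liouville_quakebend_holomorphic
    (lam K : ℝ) (hlam0 : 0 < lam) (hlam1 : lam ≤ 1) (hK : 0 ≤ K)
    (a b c d : ℝ) (ha : 0 < a) (hab : a < b) (hcd : c < d) (hd : d < 0)
    (ω : ℝ) (hω : 0 < ω)
    (ξ : ℝ × ℝ → ℂ)
    (hHolder : ∀ p q : ℝ × ℝ, ‖ξ p - ξ q‖ ≤ K * dist p q ^ lam)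
    (hsupp : ∀ x y : ℝ, (x, y) ∉ Set.Icc a b ×ˢ Set.Icc c d → ξ (x, y) = 0) :
    DifferentiableOn ℂ
      (fun τ : ℂ => ∫ p : ℝ × ℝ,
        ξ p * (Complex.exp (τ * ω) / ((p.1 : ℂ) * Complex.exp (τ * ω) - (p.2 : ℂ)) ^ 2))
      {τ : ℂ | |τ.im| < Real.pi / (2 * ω)} ∧
    ∀ t : ℝ,
      (∫ p : ℝ × ℝ,
        ξ p * (Complex.exp ((t : ℂ) * ω) / ((p.1 : ℂ) * Complex.exp ((t : ℂ) * ω) - (p.2 : ℂ)) ^ 2))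
        = ∫ p : ℝ × ℝ,
            ξ (Real.exp (-(t * ω)) * p.1, p.2) * ((((p.1 - p.2) ^ 2)⁻¹ : ℝ) : ℂ) := by
  have hdpos : (0:ℝ) < -d := by linarith
  set box : Set (ℝ × ℝ) := Set.Icc a b ×ˢ Set.Icc c d with hboxdef
  have mbox : MeasurableSet box := measurableSet_Icc.prod measurableSet_Icc
  have hfin : volume box < ⊤ := (isCompact_Icc.prod isCompact_Icc).measure_lt_top
  have hsupp' : ∀ p : ℝ × ℝ, p ∉ box → ξ p = 0 := fun p hp => hsupp p.1 p.2 hp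
  -- continuity of ξ
  have hcont : Continuous ξ := by
    rw [continuous_iff_continuousAt]
    intro p
    have hdist : Filter.Tendsto (fun q : ℝ × ℝ => dist q p) (nhds p) (nhds 0) := by
      simpa using (continuous_id.dist (continuous_const : Continuous fun _ : ℝ × ℝ => p)).tendsto p
    have h1 : Filter.Tendsto (fun q : ℝ × ℝ => K * dist q p ^ lam) (nhds p) (nhds 0) := by
      have h2 := (Real.continuousAt_rpow_const 0 lam (Or.inr hlam0.le)).tendsto.comp hdist
      rw [Real.zero_rpow hlam0.ne'] at h2
      simpa using h2.const_mul K
    have h0 : Filter.Tendsto (fun q => ξ q - ξ p) (nhds p) (nhds 0) :=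
      squeeze_zero_norm (fun q => hHolder q p) h1
    have h3 := h0.add (tendsto_const_nhds (x := ξ p))
    simpa [ContinuousAt] using h3
  -- uniform bound on ξ
  obtain ⟨C, hC0, hCle⟩ : ∃ C : ℝ, 0 ≤ C ∧ ∀ p, ‖ξ p‖ ≤ C := by
    have hmaxpos : (0:ℝ) < max (b + 1 - a) (d - c) :=
      lt_max_iff.2 (Or.inl (by linarith))
    refine ⟨K * (max (b + 1 - a) (d - c)) ^ lam,
      mul_nonneg hK (Real.rpow_nonneg hmaxpos.le _), fun p => ?_⟩
    by_cases hp : p ∈ box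
    · have h0 : ξ (b + 1, d) = 0 := by
        refine hsupp _ _ fun hmem => ?_
        have := hmem.1.2
        simp only [Set.mem_Icc] at this ⊢
        linarith [this]
      simp only [hboxdef, Set.mem_prod, Set.mem_Icc] at hp
      obtain ⟨⟨h1, h2⟩, h3, h4⟩ := hp
      calc ‖ξ p‖ = ‖ξ p - ξ (b + 1, d)‖ := by rw [h0, sub_zero]
        _ ≤ K * dist p (b + 1, d) ^ lam := hHolder _ _
        _ ≤ K * (max (b + 1 - a) (d - c)) ^ lam := by
            refine mul_le_mul_of_nonneg_left ?_ hK
            refine Real.rpow_le_rpow dist_nonneg ?_ hlam0.le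
            rw [Prod.dist_eq]
            refine max_le_max ?_ ?_ <;> rw [Real.dist_eq, abs_le] <;>
              norm_num <;> constructor <;> linarith
    · rw [hsupp' p hp]
      simpa using mul_nonneg hK (Real.rpow_nonneg hmaxpos.le _)
  -- lower bound on denominator
  have key : ∀ τ : ℂ, |τ.im| < Real.pi / (2 * ω) → ∀ p : ℝ × ℝ, p ∈ box →
      -d ≤ ‖(p.1 : ℂ) * Complex.exp (τ * ω) - (p.2 : ℂ)‖ := by
    intro τ hτ p hp
    simp only [hboxdef, Set.mem_prod, Set.mem_Icc] at hp
    obtain ⟨⟨h1, h2⟩, h3, h4⟩ := hp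
    have him : |(τ * (ω : ℂ)).im| < Real.pi / 2 := by
      have he : (τ * (ω : ℂ)).im = τ.im * ω := by simp [Complex.mul_im]
      rw [he, abs_mul, abs_of_pos hω]
      calc |τ.im| * ω < (Real.pi / (2 * ω)) * ω := by
            exact mul_lt_mul_of_pos_right hτ hω
        _ = Real.pi / 2 := by field_simp
    have hre : 0 < (Complex.exp (τ * (ω:ℂ))).re := by
      rw [Complex.exp_re]
      refine mul_pos (Real.exp_pos _) (Real.cos_pos_of_mem_Ioo ?_)
      rw [abs_lt] at him
      exact ⟨by linarith [him.1], him.2⟩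
    have hre2 : -d ≤ ((p.1 : ℂ) * Complex.exp (τ * (ω:ℂ)) - (p.2 : ℂ)).re := by
      simp only [Complex.sub_re, Complex.mul_re, Complex.ofReal_re, Complex.ofReal_im,
        zero_mul, sub_zero]
      nlinarith [mul_pos (lt_of_lt_of_le ha h1) hre]
    calc -d ≤ ((p.1 : ℂ) * Complex.exp (τ * ω) - (p.2 : ℂ)).re := hre2
      _ ≤ |((p.1 : ℂ) * Complex.exp (τ * ω) - (p.2 : ℂ)).re| := le_abs_self _
      _ ≤ ‖(p.1 : ℂ) * Complex.exp (τ * ω) - (p.2 : ℂ)‖ := Complex.abs_re_le_norm _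
  -- measurability
  have hxyz : ∀ z : ℂ, Measurable fun p : ℝ × ℝ => (p.1 : ℂ) * z - (p.2 : ℂ) := fun z =>
    ((Complex.measurable_ofReal.comp measurable_fst).mul_const z).sub
      (Complex.measurable_ofReal.comp measurable_snd)
  have hmeas1 : ∀ z : ℂ, Measurable fun p : ℝ × ℝ => ξ p * (z / ((p.1 : ℂ) * z - (p.2 : ℂ)) ^ 2) :=
    fun z => hcont.measurable.mul (measurable_const.div ((hxyz z).pow measurable_const))
  -- integrable from indicator bound
  have hInt : ∀ (h : ℝ × ℝ → ℂ) (s : Set (ℝ × ℝ)), MeasurableSet s → volume s < ⊤ →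
      AEStronglyMeasurable h volume → ∀ M : ℝ,
      (∀ p, ‖h p‖ ≤ s.indicator (fun _ => M) p) → Integrable h := by
    intro h s hs hv hm M hb
    refine Integrable.mono' ?_ hm (Filter.Eventually.of_forall hb)
    exact (integrableOn_const hv.ne (by simp)).integrable_indicator hs
  -- integrability of the main integrand
  have hFint : ∀ z : ℂ, (∀ p ∈ box, -d ≤ ‖(p.1 : ℂ) * z - (p.2 : ℂ)‖) →
      Integrable (fun p : ℝ × ℝ => ξ p * (z / ((p.1 : ℂ) * z - (p.2 : ℂ)) ^ 2)) := by
    intro z hlb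
    refine hInt _ box mbox hfin (hmeas1 z).aestronglyMeasurable (C * (‖z‖ / (-d) ^ 2)) fun p => ?_
    by_cases hp : p ∈ box
    · rw [Set.indicator_of_mem hp]
      calc ‖ξ p * (z / ((p.1 : ℂ) * z - (p.2 : ℂ)) ^ 2)‖
          = ‖ξ p‖ * (‖z‖ / ‖(p.1 : ℂ) * z - (p.2 : ℂ)‖ ^ 2) := by
            rw [norm_mul, norm_div, norm_pow]
        _ ≤ C * (‖z‖ / (-d) ^ 2) := by
            refine mul_le_mul (hCle p) ?_ (by positivity) hC0
            exact div_le_div₀ (norm_nonneg z) le_rfl (pow_pos hdpos 2)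
              (pow_le_pow_left₀ hdpos.le (hlb p hp) 2)
    · rw [Set.indicator_of_notMem hp, hsupp' p hp]
      simp
  constructor
  · -- holomorphy on the strip
    intro τ₀ hτ₀
    have hτ₀' : |τ₀.im| < Real.pi / (2 * ω) := hτ₀
    set ε : ℝ := (Real.pi / (2 * ω) - |τ₀.im|) / 2 with hεdef
    have hεpos : 0 < ε := by rw [hεdef]; linarith
    have hball : ∀ τ ∈ Metric.ball τ₀ ε, |τ.im| < Real.pi / (2 * ω) := by
      intro τ hτ
      have h2 : dist τ τ₀ < ε := Metric.mem_ball.1 hτ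
      have h1 : |τ.im - τ₀.im| ≤ dist τ τ₀ := by
        rw [Complex.dist_eq]
        simpa [Complex.sub_im] using Complex.abs_im_le_norm (τ - τ₀)
      have h3 : |τ.im| ≤ |τ₀.im| + |τ.im - τ₀.im| := by
        calc |τ.im| = |τ₀.im + (τ.im - τ₀.im)| := by ring_nf
          _ ≤ _ := abs_add_le _ _
      linarith
    set M : ℝ := Real.exp ((|τ₀.re| + ε) * ω) with hMdef
    have hM0 : 0 < M := Real.exp_pos _
    have hM : ∀ τ ∈ Metric.ball τ₀ ε, ‖Complex.exp (τ * ω)‖ ≤ M := by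
      intro τ hτ
      have h2 : dist τ τ₀ < ε := Metric.mem_ball.1 hτ
      have h1 : |τ.re - τ₀.re| ≤ dist τ τ₀ := by
        rw [Complex.dist_eq]
        simpa [Complex.sub_re] using Complex.abs_re_le_norm (τ - τ₀)
      have h4 : |τ.re| ≤ |τ₀.re| + |τ.re - τ₀.re| := by
        calc |τ.re| = |τ₀.re + (τ.re - τ₀.re)| := by ring_nf
          _ ≤ _ := abs_add_le _ _
      have h3 : τ.re ≤ |τ₀.re| + ε := by linarith [le_abs_self τ.re]
      rw [Complex.norm_exp]
      have he : (τ * (ω:ℂ)).re = τ.re * ω := by simp [Complex.mul_re]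
      rw [he, hMdef]
      exact Real.exp_le_exp.2 (mul_le_mul_of_nonneg_right h3 hω.le)
    have hb0 : (0:ℝ) < b := lt_trans ha hab
    have hc0 : (0:ℝ) < -c := by linarith
    have hub : ∀ τ ∈ Metric.ball τ₀ ε, ∀ p ∈ box,
        ‖(p.1:ℂ) * Complex.exp (τ * ω) - (p.2:ℂ)‖ ≤ b * M + -c := by
      intro τ hτ p hp
      simp only [hboxdef, Set.mem_prod, Set.mem_Icc] at hp
      obtain ⟨⟨h1, h2⟩, h3, h4⟩ := hp
      calc ‖(p.1:ℂ) * Complex.exp (τ * ω) - (p.2:ℂ)‖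
          ≤ ‖(p.1:ℂ) * Complex.exp (τ * ω)‖ + ‖(p.2:ℂ)‖ := norm_sub_le _ _
        _ ≤ b * M + -c := by
            rw [norm_mul, Complex.norm_real, Complex.norm_real, Real.norm_eq_abs,
              Real.norm_eq_abs]
            have hxa : |p.1| ≤ b := abs_le.2 ⟨by linarith, h2⟩
            have hyc : |p.2| ≤ -c := abs_le.2 ⟨by linarith, by linarith⟩
            have h5 : |p.1| * ‖Complex.exp (τ * ω)‖ ≤ b * M :=
              mul_le_mul hxa (hM τ hτ) (norm_nonneg _) hb0.le
            linarith
    set N : ℝ := ω * M * ((b * M + -c) + b * (2 * M)) with hNdef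
    have hN0 : 0 ≤ N := by
      rw [hNdef]
      refine mul_nonneg (mul_nonneg hω.le hM0.le) ?_
      nlinarith [mul_pos hb0 hM0]
    set F' : ℂ → ℝ × ℝ → ℂ := fun τ p =>
      ξ p * ((ω:ℂ) * Complex.exp (τ * ω) *
        ((p.1:ℂ) * Complex.exp (τ * ω) - (p.2:ℂ) - (p.1:ℂ) * (2 * Complex.exp (τ * ω))) /
        ((p.1:ℂ) * Complex.exp (τ * ω) - (p.2:ℂ)) ^ 3) with hF'def
    have hFm : ∀ᶠ τ in nhds τ₀, AEStronglyMeasurable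
        (fun p : ℝ × ℝ => ξ p * (Complex.exp (τ * ω) /
          ((p.1:ℂ) * Complex.exp (τ * ω) - (p.2:ℂ)) ^ 2)) volume :=
      Filter.Eventually.of_forall fun τ => (hmeas1 _).aestronglyMeasurable
    have hFi : Integrable (fun p : ℝ × ℝ => ξ p * (Complex.exp (τ₀ * ω) /
        ((p.1:ℂ) * Complex.exp (τ₀ * ω) - (p.2:ℂ)) ^ 2)) volume :=
      hFint _ (key τ₀ hτ₀')
    have hF'm : AEStronglyMeasurable (F' τ₀) volume := by
      rw [hF'def]
      apply Measurable.aestronglyMeasurable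
      apply hcont.measurable.mul
      apply Measurable.div _ ((hxyz _).pow measurable_const)
      exact ((hxyz _).sub
        ((Complex.measurable_ofReal.comp measurable_fst).mul_const _)).const_mul _
    have hbnd : ∀ᵐ p ∂(volume : Measure (ℝ × ℝ)), ∀ τ ∈ Metric.ball τ₀ ε,
        ‖F' τ p‖ ≤ box.indicator (fun _ => C * (N / (-d) ^ 3)) p := by
      refine Filter.Eventually.of_forall fun p τ hτ => ?_
      by_cases hp : p ∈ box
      · rw [Set.indicator_of_mem hp]
        have hun : -d ≤ ‖(p.1:ℂ) * Complex.exp (τ * ω) - (p.2:ℂ)‖ := key τ (hball τ hτ) p hp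
        have hu2 : ‖(p.1:ℂ) * Complex.exp (τ * ω) - (p.2:ℂ)‖ ≤ b * M + -c := hub τ hτ p hp
        simp only [hboxdef, Set.mem_prod, Set.mem_Icc] at hp
        obtain ⟨⟨h1, h2⟩, h3, h4⟩ := hp
        have hxb : |p.1| ≤ b := abs_le.2 ⟨by linarith, h2⟩
        have hEn : ‖Complex.exp (τ * ω)‖ ≤ M := hM τ hτ
        have h2E : ‖(2:ℂ) * Complex.exp (τ * ω)‖ ≤ 2 * M := by
          rw [norm_mul]
          have h2n : ‖(2:ℂ)‖ = 2 := by norm_num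
          rw [h2n]
          linarith
        have hxE : ‖(p.1:ℂ) * (2 * Complex.exp (τ * ω))‖ ≤ b * (2 * M) := by
          rw [norm_mul, Complex.norm_real, Real.norm_eq_abs]
          exact mul_le_mul hxb h2E (norm_nonneg _) hb0.le
        have hw : ‖(p.1:ℂ) * Complex.exp (τ * ω) - (p.2:ℂ) -
            (p.1:ℂ) * (2 * Complex.exp (τ * ω))‖ ≤ (b * M + -c) + b * (2 * M) :=
          (norm_sub_le _ _).trans (add_le_add hu2 hxE)
        have hωE : ‖(ω:ℂ) * Complex.exp (τ * ω)‖ ≤ ω * M := by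
          rw [norm_mul, Complex.norm_real, Real.norm_eq_abs, abs_of_pos hω]
          exact mul_le_mul_of_nonneg_left hEn hω.le
        have hnum : ‖(ω:ℂ) * Complex.exp (τ * ω) *
            ((p.1:ℂ) * Complex.exp (τ * ω) - (p.2:ℂ) -
              (p.1:ℂ) * (2 * Complex.exp (τ * ω)))‖ ≤ N := by
          rw [norm_mul, hNdef]
          exact mul_le_mul hωE hw (norm_nonneg _) (mul_nonneg hω.le hM0.le)
        calc ‖F' τ p‖ = ‖ξ p‖ * (‖(ω:ℂ) * Complex.exp (τ * ω) *
              ((p.1:ℂ) * Complex.exp (τ * ω) - (p.2:ℂ) -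
                (p.1:ℂ) * (2 * Complex.exp (τ * ω)))‖ /
              ‖(p.1:ℂ) * Complex.exp (τ * ω) - (p.2:ℂ)‖ ^ 3) := by simp only [hF'def, norm_mul, norm_div, norm_pow]
          _ ≤ C * (N / (-d) ^ 3) := by
            refine mul_le_mul (hCle p) ?_ (by positivity) hC0
            exact div_le_div₀ hN0 hnum (pow_pos hdpos 3) (pow_le_pow_left₀ hdpos.le hun 3)
      · rw [Set.indicator_of_notMem hp, hF'def]
        simp [hsupp' p hp]
    have hbi : Integrable (box.indicator fun _ => C * (N / (-d) ^ 3)) (volume : Measure (ℝ × ℝ)) :=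
      (integrableOn_const hfin.ne enorm_ne_top).integrable_indicator mbox
    have hdiff : ∀ᵐ p ∂(volume : Measure (ℝ × ℝ)), ∀ τ ∈ Metric.ball τ₀ ε,
        HasDerivAt (fun τ : ℂ => ξ p * (Complex.exp (τ * ω) /
          ((p.1:ℂ) * Complex.exp (τ * ω) - (p.2:ℂ)) ^ 2)) (F' τ p) τ := by
      refine Filter.Eventually.of_forall fun p τ hτ => ?_
      by_cases hp : p ∈ box
      · have hu : (p.1:ℂ) * Complex.exp (τ * ω) - (p.2:ℂ) ≠ 0 := by
          intro h0
          have hk := key τ (hball τ hτ) p hp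
          rw [h0, norm_zero] at hk
          linarith
        have hE : HasDerivAt (fun τ : ℂ => Complex.exp (τ * ω))
            (Complex.exp (τ * ω) * ω) τ := (hasDerivAt_mul_const ((ω:ℂ))).cexp
        have hu' : HasDerivAt (fun τ : ℂ => (p.1:ℂ) * Complex.exp (τ * ω) - (p.2:ℂ))
            ((p.1:ℂ) * (Complex.exp (τ * ω) * ω)) τ := (hE.const_mul _).sub_const _
        have hg := hu'.pow 2
        have hdiv := (hE.div hg (pow_ne_zero 2 hu)).const_mul (ξ p)
        rw [hF'def]
        refine hdiv.congr_deriv ?_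
        simp only [Pi.pow_apply, Nat.cast_ofNat, pow_one]
        congr 1
        rw [div_eq_div_iff (pow_ne_zero 2 (pow_ne_zero 2 hu)) (pow_ne_zero 3 hu)]
        ring
      · rw [hF'def]
        simp only [hsupp' p hp, zero_mul]
        exact hasDerivAt_const τ 0
    exact ((hasDerivAt_integral_of_dominated_loc_of_deriv_le (Metric.ball_mem_nhds τ₀ hεpos) hFm hFi hF'm hbnd hbi
      hdiff).2.differentiableAt).differentiableWithinAt
  · intro t
    set E : ℝ := Real.exp (t * ω) with hEdef
    have hE : 0 < E := Real.exp_pos _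
    have hcast : Complex.exp ((t:ℂ) * ω) = (E:ℂ) := by
      rw [hEdef, Complex.ofReal_exp]
      congr 1
      push_cast
      ring
    simp only [hcast, Real.exp_neg, ← hEdef]
    set f : ℝ × ℝ → ℂ := fun p => ξ p * ((E:ℂ) / ((p.1:ℂ) * (E:ℂ) - (p.2:ℂ)) ^ 2) with hfdef
    set g : ℝ × ℝ → ℂ := fun p =>
      ξ (E⁻¹ * p.1, p.2) * ((((p.1 - p.2) ^ 2)⁻¹ : ℝ) : ℂ) with hgdef
    have hlb : ∀ p ∈ box, -d ≤ ‖(p.1:ℂ) * (E:ℂ) - (p.2:ℂ)‖ := by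
      intro p hp
      have hstrip0 : |(Complex.ofReal t).im| < Real.pi / (2 * ω) := by
        rw [Complex.ofReal_im, abs_zero]
        exact div_pos Real.pi_pos (by linarith)
      have hk := key (t:ℂ) hstrip0 p hp
      rwa [hcast] at hk
    have hfi : Integrable f := hFint (E:ℂ) hlb
    have hbox2m : MeasurableSet (Set.Icc (E*a) (E*b) ×ˢ Set.Icc c d) :=
      measurableSet_Icc.prod measurableSet_Icc
    have hbox2f : volume (Set.Icc (E*a) (E*b) ×ˢ Set.Icc c d) < ⊤ :=
      (isCompact_Icc.prod isCompact_Icc).measure_lt_top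
    have hgm : Measurable g := by
      apply Measurable.mul
      · exact hcont.measurable.comp ((measurable_fst.const_mul E⁻¹).prodMk measurable_snd)
      · exact Complex.measurable_ofReal.comp
          (((measurable_fst.sub measurable_snd).pow measurable_const).inv)
    have hgi : Integrable g := by
      refine hInt g _ hbox2m hbox2f hgm.aestronglyMeasurable (C * ((-d)^2)⁻¹) fun p => ?_
      by_cases hp : p ∈ Set.Icc (E*a) (E*b) ×ˢ Set.Icc c d
      · rw [Set.indicator_of_mem hp]
        simp only [Set.mem_prod, Set.mem_Icc] at hp
        obtain ⟨⟨h1, h2⟩, h3, h4⟩ := hp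
        have hx0 : 0 < p.1 := lt_of_lt_of_le (mul_pos hE ha) h1
        have hsub : -d ≤ p.1 - p.2 := by linarith
        have hsq : (-d)^2 ≤ (p.1 - p.2)^2 := pow_le_pow_left₀ hdpos.le hsub 2
        have hinv : |((p.1 - p.2)^2)⁻¹| ≤ ((-d)^2)⁻¹ := by
          rw [abs_of_nonneg (inv_nonneg.2 (sq_nonneg _))]
          exact inv_anti₀ (pow_pos hdpos 2) hsq
        calc ‖g p‖ = ‖ξ (E⁻¹ * p.1, p.2)‖ * |((p.1 - p.2)^2)⁻¹| := by
              simp only [hgdef, norm_mul, Complex.norm_real, Real.norm_eq_abs]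
          _ ≤ C * ((-d)^2)⁻¹ := mul_le_mul (hCle _) hinv (abs_nonneg _) hC0
      · rw [Set.indicator_of_notMem hp]
        have hz : ξ (E⁻¹ * p.1, p.2) = 0 := by
          apply hsupp
          intro hmem
          apply hp
          simp only [hboxdef, Set.mem_prod, Set.mem_Icc] at hmem
          simp only [Set.mem_prod, Set.mem_Icc]
          obtain ⟨⟨h1, h2⟩, h3, h4⟩ := hmem
          have e1 : p.1 = E * (E⁻¹ * p.1) := (mul_inv_cancel_left₀ hE.ne' p.1).symm
          refine ⟨⟨?_, ?_⟩, h3, h4⟩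
          · rw [e1]; exact mul_le_mul_of_nonneg_left h1 hE.le
          · rw [e1]; exact mul_le_mul_of_nonneg_left h2 hE.le
        simp only [hgdef, hz, zero_mul, norm_zero, le_refl]
    have hpt : ∀ x y : ℝ, f (x, y) = E • g (E * x, y) := by
      intro x y
      simp only [hfdef, hgdef]
      rw [inv_mul_cancel_left₀ hE.ne']
      rw [Complex.real_smul]
      push_cast
      rw [div_eq_mul_inv]
      ring
    have main : (∫ p : ℝ × ℝ, f p) = ∫ p : ℝ × ℝ, g p := by
      calc (∫ p : ℝ × ℝ, f p) = ∫ x : ℝ, ∫ y : ℝ, f (x, y) := integral_prod f hfi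
        _ = ∫ x : ℝ, E • ∫ y : ℝ, g (E * x, y) := by
            refine integral_congr_ae (Filter.Eventually.of_forall fun x => ?_)
            show (∫ y : ℝ, f (x, y)) = E • ∫ y : ℝ, g (E * x, y)
            rw [← integral_smul]
            exact integral_congr_ae (Filter.Eventually.of_forall fun y => hpt x y)
        _ = E • ∫ x : ℝ, (fun x' : ℝ => ∫ y : ℝ, g (x', y)) (E * x) := integral_smul E _
        _ = E • (|E⁻¹| • ∫ x : ℝ, ∫ y : ℝ, g (x, y)) := by
            rw [Measure.integral_comp_mul_left (fun x' : ℝ => ∫ y : ℝ, g (x', y)) E]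
        _ = ∫ x : ℝ, ∫ y : ℝ, g (x, y) := by
            rw [abs_of_pos (inv_pos.2 hE), smul_smul, mul_inv_cancel₀ hE.ne', one_smul]
        _ = ∫ p : ℝ × ℝ, g p := (integral_prod g hgi).symm
    exact main
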